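/- Let X be a zero-dimensional topological space and F = (W, ≤) a rooted S4-frame (finite set W with a reflexive transitive relation ≤ with a root r such that every element is above r) containing a maximal point m (i.e., the upper set of m is {m}). If F (with the Alexandroff topology of up-sets) is a continuous open surjective image of some open subspace of X, then F is a continuous open surjective image of X itself. -/

import Mathlib

open Topology

/-- The Alexandroff topology on a quasi-ordered set whose open sets are the up-sets. -/
def upsetTopology {W : Type*} (le : W → W → Prop) : TopologicalSpace W where
  IsOpen U := ∀ ⦃a⦄, a ∈ U → ∀ ⦃b⦄, le a b → b ∈ U
  isOpen_univ := fun _ _ _ _ => trivial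
  isOpen_inter := fun _ _ hU hV _ ha _ hab => ⟨hU ha.1 hab, hV ha.2 hab⟩
  isOpen_sUnion := fun S hS a ha b hab => by
    obtain ⟨U, hU, haU⟩ := ha
    exact ⟨U, hU, hS U hU haU hab⟩

/-- If a finite rooted S4-frame with a maximal point is an interior (continuous open)
surjective image of an open subspace of a zero-dimensional space `X`, then it is an
interior surjective image of `X` itself. -/
theorem stmt_0 {X W : Type*} [TopologicalSpace X] [Fintype W]
    (hzd : ∀ (x : X) (U : Set X), IsOpen U → x ∈ U → ∃ C : Set X, IsClopen C ∧ x ∈ C ∧ C ⊆ U)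
    (le : W → W → Prop)
    (hrefl : ∀ w, le w w)
    (htrans : ∀ a b c, le a b → le b c → le a c)
    (r : W) (hroot : ∀ w, le r w)
    (m : W) (hmax : ∀ w, le m w → w = m)
    (h : ∃ Y : Set X, IsOpen Y ∧ ∃ f : Y → W, Function.Surjective f ∧
      Continuous[inferInstance, upsetTopology le] f ∧
      @IsOpenMap Y W inferInstance (upsetTopology le) f) :
    ∃ g : X → W, Function.Surjective g ∧
      Continuous[inferInstance, upsetTopology le] g ∧
      @IsOpenMap X W inferInstance (upsetTopology le) g := by
  classical
  obtain ⟨Y, hYopen, f, hfsurj, hfcont, hfopen⟩ := h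
  obtain ⟨y, hy⟩ := hfsurj r
  obtain ⟨C, hCclopen, hyC, hCY⟩ := hzd y.1 Y hYopen y.2
  set g : X → W := fun x => if hx : x ∈ C then f ⟨x, hCY hx⟩ else m with hg
  have hvalopen : IsOpenMap (Subtype.val : Y → X) := hYopen.isOpenMap_subtype_val
  refine ⟨g, ?_, ?_, ?_⟩
  · -- surjectivity
    intro w
    have hCopen : IsOpen ((Subtype.val : Y → X) ⁻¹' C) :=
      hCclopen.2.preimage continuous_subtype_val
    have himg : IsOpen[upsetTopology le] (f '' ((Subtype.val : Y → X) ⁻¹' C)) :=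
      hfopen _ hCopen
    have hr : r ∈ f '' ((Subtype.val : Y → X) ⁻¹' C) := ⟨y, hyC, hy⟩
    have hw : w ∈ f '' ((Subtype.val : Y → X) ⁻¹' C) := himg hr (hroot w)
    obtain ⟨z, hzC, hzw⟩ := hw
    refine ⟨z.1, ?_⟩
    have hzC' : (z : X) ∈ C := hzC
    simp only [hg]
    rw [dif_pos hzC']
    simpa using hzw
  · -- continuity
    refine (@continuous_def X W _ (upsetTopology le) g).mpr fun U hU => ?_
    have hA : IsOpen (Subtype.val '' (f ⁻¹' U) : Set X) :=
      hvalopen _ ((@continuous_def Y W _ (upsetTopology le) f).mp hfcont U hU)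
    have key : ∀ x (hx : x ∈ C), (x ∈ g ⁻¹' U ↔ x ∈ Subtype.val '' (f ⁻¹' U)) := by
      intro x hx
      constructor
      · intro hgx
        refine ⟨⟨x, hCY hx⟩, ?_, rfl⟩
        simpa only [hg, Set.mem_preimage, dif_pos hx] using hgx
      · rintro ⟨z, hz, rfl⟩
        simp only [hg, Set.mem_preimage, dif_pos hx]
        exact hz
    by_cases hm : m ∈ U
    · have : g ⁻¹' U = (Subtype.val '' (f ⁻¹' U) ∩ C) ∪ Cᶜ := by
        ext x
        by_cases hx : x ∈ C
        · simp only [Set.mem_union, Set.mem_inter_iff, Set.mem_compl_iff, hx,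
            not_true, or_false, and_true]
          exact key x hx
        · simp only [Set.mem_union, Set.mem_compl_iff, hx, not_false_iff, or_true,
            iff_true, Set.mem_preimage, hg, dif_neg hx]
          exact hm
      rw [this]
      exact (hA.inter hCclopen.2).union hCclopen.1.isOpen_compl
    · have : g ⁻¹' U = Subtype.val '' (f ⁻¹' U) ∩ C := by
        ext x
        by_cases hx : x ∈ C
        · simp only [Set.mem_inter_iff, hx, and_true]
          exact key x hx
        · simp only [Set.mem_inter_iff, hx, and_false, iff_false, Set.mem_preimage,
            hg, dif_neg hx]
          exact hm
      rw [this]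
      exact hA.inter hCclopen.2
  · -- open map
    intro V hV
    intro a ha b hab
    obtain ⟨x, hxV, hxa⟩ := ha
    by_cases hx : x ∈ C
    · have hxa' : f ⟨x, hCY hx⟩ = a := by simpa only [hg, dif_pos hx] using hxa
      have hopen : IsOpen ((Subtype.val : Y → X) ⁻¹' (V ∩ C)) :=
        (hV.inter hCclopen.2).preimage continuous_subtype_val
      have himg : IsOpen[upsetTopology le] (f '' ((Subtype.val : Y → X) ⁻¹' (V ∩ C))) :=
        hfopen _ hopen
      have hain : a ∈ f '' ((Subtype.val : Y → X) ⁻¹' (V ∩ C)) :=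
        ⟨⟨x, hCY hx⟩, ⟨hxV, hx⟩, hxa'⟩
      obtain ⟨z, ⟨hzV, hzC⟩, hzb⟩ := himg hain hab
      refine ⟨z.1, hzV, ?_⟩
      simp only [hg, dif_pos hzC]
      simpa using hzb
    · have : a = m := by simpa only [hg, dif_neg hx] using hxa.symm
      have hbm : b = m := hmax b (this ▸ hab)
      exact ⟨x, hxV, by rw [hxa, hbm, this]⟩
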